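/- Let ε ∈ [0,1], α ∈ [ε,1], and x ∈ ℝ. If X is a random variable taking value x - ε/α with probability α and value x with probability 1-α, then E[e^X] ≤ e^{x - ε/2}. -/

import Mathlib

theorem stmt_1 (ε α x : ℝ) (hε0 : 0 ≤ ε) (hε1 : ε ≤ 1) (hα : ε ≤ α) (hα1 : α ≤ 1)
    (hαpos : 0 < α) :
    α * Real.exp (x - ε / α) + (1 - α) * Real.exp x ≤ Real.exp (x - ε / 2) := by
  set t := ε / α with ht
  have ht0 : 0 ≤ t := div_nonneg hε0 hαpos.le
  have ht1 : t ≤ 1 := (div_le_one hαpos).mpr hα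
  have hq := Real.quadratic_le_exp_of_nonneg ht0
  have h2 : Real.exp (-t) ≤ 1 - t + t ^ 2 / 2 := by
    rw [Real.exp_neg, inv_eq_one_div, div_le_iff₀ (Real.exp_pos t)]
    nlinarith [sq_nonneg (1 - t), sq_nonneg (t ^ 2), Real.exp_pos t]
  have hat : α * t = ε := by rw [ht]; field_simp [hαpos.ne']
  have h3 : -(ε / 2) + 1 ≤ Real.exp (-(ε / 2)) := Real.add_one_le_exp _
  have hk : α * Real.exp (-t) + (1 - α) ≤ Real.exp (-(ε / 2)) := by
    nlinarith [mul_le_mul_of_nonneg_left h2 hαpos.le,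
      mul_le_of_le_one_right hε0 ht1]
  calc α * Real.exp (x - t) + (1 - α) * Real.exp x
      = Real.exp x * (α * Real.exp (-t) + (1 - α)) := by
        rw [sub_eq_add_neg, Real.exp_add]; ring
    _ ≤ Real.exp x * Real.exp (-(ε / 2)) :=
        mul_le_mul_of_nonneg_left hk (Real.exp_pos x).le
    _ = Real.exp (x - ε / 2) := by rw [← Real.exp_add]; ring_nf
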